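/- Let a > −1, b > −1 and c > max{0, a−b} be real numbers. Then the function x ↦ W(x; a, b, c) is twice differentiable on (0, ∞) and satisfies, for all x > 0, the second-order differential equation x² W''(x; a, b, c) + (x − (a+b−1)) x W'(x; a, b, c) + (ab − (c+b−1)x) W(x; a, b, c) = 0. -/

import Mathlib

open MeasureTheory Filter Set

/-- Confluent hypergeometric function of the second kind (Tricomi function),
via its integral representation, valid for `α > 0`, `x > 0`. -/
noncomputable def TricomiU (α β x : ℝ) : ℝ :=
  (1 / Real.Gamma α) *
    ∫ t in Set.Ioi (0:ℝ), t ^ (α - 1) * (1 + t) ^ (β - α - 1) * Real.exp (-t * x)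

/-- The weight function `W(x; a, b, c)`. -/
noncomputable def W (a b c x : ℝ) : ℝ :=
  (Real.Gamma (c + b + 1) / (Real.Gamma (a + 1) * Real.Gamma (b + 1))) *
    Real.exp (-x) * x ^ a * TricomiU c (a - b + 1) x

noncomputable def G (p q x : ℝ) : ℝ :=
  ∫ t in Set.Ioi (0:ℝ), t ^ p * (1 + t) ^ q * Real.exp (-t * x)

/-- key polynomial bound on (1+t)^q -/
lemma one_add_rpow_le {t q : ℝ} (ht : 0 < t) :
    (1 + t) ^ q ≤ 2 ^ (max q 0) * (1 + t ^ (max q 0)) := by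
  have h1t : (1:ℝ) ≤ 1 + t := by linarith
  have h0 : (0:ℝ) ≤ max q 0 := le_max_right _ _
  calc (1 + t) ^ q ≤ (1 + t) ^ (max q 0) :=
        Real.rpow_le_rpow_of_exponent_le h1t (le_max_left _ _)
    _ ≤ (2 * max 1 t) ^ (max q 0) := by
        apply Real.rpow_le_rpow (by linarith) ?_ h0
        rcases le_total t 1 with h | h
        · rw [max_eq_left h]; linarith
        · rw [max_eq_right h]; linarith
    _ = 2 ^ (max q 0) * (max 1 t) ^ (max q 0) := by
        rw [Real.mul_rpow (by norm_num) (le_max_of_le_left zero_le_one)]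
    _ ≤ 2 ^ (max q 0) * (1 + t ^ (max q 0)) := by
        apply mul_le_mul_of_nonneg_left ?_ (Real.rpow_nonneg (by norm_num) _)
        rcases le_total t 1 with h | h
        · rw [max_eq_left h, Real.one_rpow]
          have := Real.rpow_nonneg ht.le (max q 0); linarith
        · rw [max_eq_right h]
          have := Real.rpow_le_rpow ht.le (le_refl t) h0; linarith

lemma integrableOn_rpow_exp {s x : ℝ} (hs : -1 < s) (hx : 0 < x) :
    IntegrableOn (fun t : ℝ => t ^ s * Real.exp (-t * x)) (Ioi 0) := by
  have := integrableOn_rpow_mul_exp_neg_mul_rpow hs zero_lt_one hx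
  refine this.congr_fun (fun t ht => ?_) measurableSet_Ioi
  dsimp only
  rw [Real.rpow_one, neg_mul, neg_mul, mul_comm x t]

lemma contOn_G_integrand (p q x : ℝ) :
    ContinuousOn (fun t : ℝ => t ^ p * (1 + t) ^ q * Real.exp (-t * x)) (Ioi 0) := by
  apply ContinuousOn.mul
  · apply ContinuousOn.mul
    · exact fun t ht => (Real.continuousAt_rpow_const t p (Or.inl (ne_of_gt ht))).continuousWithinAt
    · intro t ht
      exact (Real.continuousAt_rpow_const (1+t) q (Or.inl (by simp only [mem_Ioi] at ht; positivity))).comp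
        (continuous_const.add continuous_id).continuousAt |>.continuousWithinAt
  · exact (Real.continuous_exp.comp ((continuous_neg.mul continuous_const))).continuousOn

lemma integrable_G {p : ℝ} (q : ℝ) {x : ℝ} (hp : -1 < p) (hx : 0 < x) :
    IntegrableOn (fun t : ℝ => t ^ p * (1 + t) ^ q * Real.exp (-t * x)) (Ioi 0) := by
  set q' := max q 0 with hq'
  have h0 : (0:ℝ) ≤ q' := le_max_right _ _
  apply Integrable.mono'
    (g := fun t => 2 ^ q' * (t ^ p * Real.exp (-t * x) + t ^ (p + q') * Real.exp (-t * x)))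
  · exact (((integrableOn_rpow_exp hp hx).add
      (integrableOn_rpow_exp (by linarith) hx)).const_mul _)
  · exact (contOn_G_integrand p q x).aestronglyMeasurable measurableSet_Ioi
  · rw [ae_restrict_iff' measurableSet_Ioi]
    filter_upwards with t ht
    simp only [mem_Ioi] at ht
    have he : (0:ℝ) < Real.exp (-t * x) := Real.exp_pos _
    have htp : (0:ℝ) ≤ t ^ p := Real.rpow_nonneg ht.le _
    have h1t : (0:ℝ) ≤ (1+t) ^ q := Real.rpow_nonneg (by linarith) _
    rw [Real.norm_eq_abs, abs_of_nonneg (by positivity)]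
    have key := one_add_rpow_le (q := q) ht
    have : t ^ (p + q') = t ^ p * t ^ q' := Real.rpow_add ht _ _
    rw [this]
    calc t ^ p * (1+t) ^ q * Real.exp (-t*x)
        ≤ t ^ p * (2 ^ q' * (1 + t ^ q')) * Real.exp (-t*x) := by
          apply mul_le_mul_of_nonneg_right (mul_le_mul_of_nonneg_left key htp) he.le
      _ = 2 ^ q' * (t ^ p * Real.exp (-t*x) + t ^ p * t ^ q' * Real.exp (-t*x)) := by ring

lemma hasDerivAt_G {p : ℝ} (q : ℝ) {x : ℝ} (hp : -1 < p) (hx : 0 < x) :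
    HasDerivAt (G p q) (-G (p+1) q x) x := by
  have hmeas : ∀ y : ℝ, AEStronglyMeasurable
      (fun t : ℝ => t ^ p * (1 + t) ^ q * Real.exp (-t * y))
      (volume.restrict (Ioi 0)) :=
    fun y => (contOn_G_integrand p q y).aestronglyMeasurable measurableSet_Ioi
  have hmeas' : ∀ y : ℝ, AEStronglyMeasurable
      (fun t : ℝ => -(t ^ (p+1) * (1 + t) ^ q * Real.exp (-t * y)))
      (volume.restrict (Ioi 0)) :=
    fun y => ((contOn_G_integrand (p+1) q y).aestronglyMeasurable measurableSet_Ioi).neg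
  have key := hasDerivAt_integral_of_dominated_loc_of_deriv_le
    (μ := volume.restrict (Ioi 0)) (x₀ := x)
    (F := fun y t => t ^ p * (1 + t) ^ q * Real.exp (-t * y))
    (F' := fun y t => -(t ^ (p+1) * (1 + t) ^ q * Real.exp (-t * y)))
    (bound := fun t => t ^ (p+1) * (1 + t) ^ q * Real.exp (-t * (x/2)))
    (Metric.ball_mem_nhds x (half_pos hx)) (Eventually.of_forall hmeas) (integrable_G q hp hx)
    (hmeas' x) ?_ (integrable_G q (by linarith) (half_pos hx)) ?_
  · have h1 : (∫ t in Ioi (0:ℝ), -(t ^ (p+1) * (1 + t) ^ q * Real.exp (-t * x)))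
        = -G (p+1) q x := by
      rw [integral_neg]; rfl
    rw [h1] at key
    exact key.2
  · rw [ae_restrict_iff' measurableSet_Ioi]
    filter_upwards with t ht y hy
    simp only [mem_Ioi] at ht
    simp only [Metric.mem_ball, Real.dist_eq] at hy
    have hy2 : x/2 ≤ y := by
      rcases abs_lt.mp hy with ⟨h1, h2⟩; linarith
    have h1t : (0:ℝ) ≤ (1+t) ^ q := Real.rpow_nonneg (by linarith) _
    have htp : (0:ℝ) ≤ t ^ (p+1) := Real.rpow_nonneg ht.le _
    rw [norm_neg, Real.norm_eq_abs, abs_of_nonneg (by positivity)]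
    have : Real.exp (-t * y) ≤ Real.exp (-t * (x/2)) := by
      apply Real.exp_le_exp.mpr; nlinarith
    apply mul_le_mul_of_nonneg_left this (by positivity)
  · rw [ae_restrict_iff' measurableSet_Ioi]
    filter_upwards with t ht y _
    simp only [mem_Ioi] at ht
    have h1 : HasDerivAt (fun y : ℝ => Real.exp (-t * y)) (Real.exp (-t * y) * (-t)) y := by
      simpa using (HasDerivAt.exp ((hasDerivAt_id y).const_mul (-t)))
    have h2 := h1.const_mul (t ^ p * (1 + t) ^ q)
    refine h2.congr_deriv ?_
    rw [Real.rpow_add_one (ne_of_gt ht)]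
    ring

lemma G_split {p : ℝ} (q : ℝ) {x : ℝ} (hp : -1 < p) (hx : 0 < x) :
    G p (q+1) x = G p q x + G (p+1) q x := by
  unfold G
  rw [← integral_add (integrable_G q hp hx) (integrable_G q (by linarith) hx)]
  apply setIntegral_congr_fun measurableSet_Ioi
  intro t ht
  dsimp only
  simp only [mem_Ioi] at ht
  rw [Real.rpow_add (by linarith : (0:ℝ) < 1 + t) q 1, Real.rpow_one,
    Real.rpow_add_one (ne_of_gt ht)]
  ring

/-- Kummer relation for G, via integration by parts. -/
lemma kummer_G {c : ℝ} (β : ℝ) {x : ℝ} (hc : 0 < c) (hx : 0 < x) :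
    c * G (c-1) (β-c) x + (β-c) * G c (β-c-1) x - x * G c (β-c) x = 0 := by
  set φ : ℝ → ℝ := fun t => t ^ c * (1 + t) ^ (β-c) * Real.exp (-t * x) with hφ
  set ψ : ℝ → ℝ := fun t =>
    c * (t ^ (c-1) * (1 + t) ^ (β-c) * Real.exp (-t * x))
    + (β-c) * (t ^ c * (1 + t) ^ (β-c-1) * Real.exp (-t * x))
    - x * (t ^ c * (1 + t) ^ (β-c) * Real.exp (-t * x)) with hψ
  have hderiv : ∀ t ∈ Ioi (0:ℝ), HasDerivAt φ (ψ t) t := by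
    intro t ht
    simp only [mem_Ioi] at ht
    have h1 : HasDerivAt (fun t : ℝ => t ^ c) (c * t ^ (c-1)) t :=
      Real.hasDerivAt_rpow_const (Or.inl (ne_of_gt ht))
    have h2 : HasDerivAt (fun t : ℝ => (1 + t) ^ (β-c)) (1 * (β-c) * (1+t) ^ (β-c-1)) t :=
      HasDerivAt.rpow_const ((hasDerivAt_id t).const_add 1) (Or.inl (by positivity))
    have h3 : HasDerivAt (fun t : ℝ => Real.exp (-t * x)) (Real.exp (-t * x) * (-x)) t := by
      simpa [mul_comm] using (HasDerivAt.exp ((hasDerivAt_id t).const_mul (-x)))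
    have := (h1.mul h2).mul h3
    refine this.congr_deriv ?_
    simp only [Pi.mul_apply, Pi.sub_apply]
    simp only [hψ]
    ring
  have hint : IntegrableOn ψ (Ioi 0) := by
    apply Integrable.sub
    apply Integrable.add
    · exact (integrable_G (β-c) (by linarith) hx).const_mul c
    · exact (integrable_G (β-c-1) (by linarith) hx).const_mul (β-c)
    · exact (integrable_G (β-c) (by linarith) hx).const_mul x
  have hcont : ContinuousWithinAt φ (Ici 0) 0 := by
    have hc1 : ContinuousWithinAt (fun t : ℝ => t ^ c) (Ici 0) 0 :=
      (Real.continuousAt_rpow_const 0 c (Or.inr hc.le)).continuousWithinAt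
    apply ContinuousWithinAt.mul
    apply ContinuousWithinAt.mul hc1
    · exact (((continuous_const.add continuous_id).continuousAt (x := (0:ℝ))).rpow_const
        (Or.inl (by norm_num))).continuousWithinAt
    · exact (Real.continuous_exp.comp (continuous_neg.mul continuous_const)).continuousWithinAt
  have htend : Tendsto φ atTop (nhds 0) := by
    set q' := max (β - c) 0 with hq'
    have h0 : (0:ℝ) ≤ q' := le_max_right _ _
    have hb1 : Tendsto (fun t : ℝ => 2 ^ q' * (t ^ c * Real.exp (-x * t)
        + t ^ (c + q') * Real.exp (-x * t))) atTop (nhds (2 ^ q' * (0 + 0))) := by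
      apply Tendsto.const_mul
      exact (tendsto_rpow_mul_exp_neg_mul_atTop_nhds_zero c x hx).add
        (tendsto_rpow_mul_exp_neg_mul_atTop_nhds_zero (c + q') x hx)
    rw [show (2:ℝ) ^ q' * (0 + 0) = 0 by ring] at hb1
    apply squeeze_zero' ?_ ?_ hb1
    · filter_upwards [eventually_gt_atTop (0:ℝ)] with t ht
      have h1t : (0:ℝ) ≤ (1+t) ^ (β-c) := Real.rpow_nonneg (by linarith) _
      have htp : (0:ℝ) ≤ t ^ c := Real.rpow_nonneg ht.le _
      positivity
    · filter_upwards [eventually_gt_atTop (0:ℝ)] with t ht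
      have key := one_add_rpow_le (q := β - c) ht
      have htp : (0:ℝ) ≤ t ^ c := Real.rpow_nonneg ht.le _
      have he : (0:ℝ) < Real.exp (-t * x) := Real.exp_pos _
      have hsplit : t ^ (c + q') = t ^ c * t ^ q' := Real.rpow_add ht _ _
      calc φ t ≤ t ^ c * (2 ^ q' * (1 + t ^ q')) * Real.exp (-t * x) := by
            apply mul_le_mul_of_nonneg_right (mul_le_mul_of_nonneg_left key htp) he.le
        _ = 2 ^ q' * (t ^ c * Real.exp (-x * t) + t ^ (c + q') * Real.exp (-x * t)) := by
            rw [hsplit, show -x * t = -t * x by ring]; ring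
  have hFTC := integral_Ioi_of_hasDerivAt_of_tendsto hcont hderiv hint htend
  have hφ0 : φ 0 = 0 := by
    simp only [hφ, Real.zero_rpow (ne_of_gt hc), zero_mul]
  rw [hφ0, sub_zero] at hFTC
  have hexp : (∫ t in Ioi (0:ℝ), ψ t)
      = c * G (c-1) (β-c) x + (β-c) * G c (β-c-1) x - x * G c (β-c) x := by
    unfold G
    rw [integral_sub, integral_add, integral_const_mul, integral_const_mul, integral_const_mul]
    · exact (integrable_G (β-c) (by linarith) hx).const_mul c
    · exact (integrable_G (β-c-1) (by linarith) hx).const_mul (β-c)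
    · apply Integrable.add
      · exact (integrable_G (β-c) (by linarith) hx).const_mul c
      · exact (integrable_G (β-c-1) (by linarith) hx).const_mul (β-c)
    · exact (integrable_G (β-c) (by linarith) hx).const_mul x
  rw [← hexp, hFTC]

theorem W_second_order_ODE (a b c : ℝ) (ha : a > -1) (hb : b > -1)
    (hc : c > max 0 (a - b)) :
    ∀ x > (0:ℝ),
      DifferentiableAt ℝ (W a b c) x ∧
      DifferentiableAt ℝ (deriv (W a b c)) x ∧
      x ^ 2 * deriv (deriv (W a b c)) x
        + (x - (a + b - 1)) * x * deriv (W a b c) x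
        + (a * b - (c + b - 1) * x) * W a b c x = 0 := by
  have hc0 : 0 < c := lt_of_le_of_lt (le_max_left 0 (a-b)) hc
  set K : ℝ := Real.Gamma (c + b + 1) / (Real.Gamma (a + 1) * Real.Gamma (b + 1))
      * (1 / Real.Gamma c) with hK
  have hW : W a b c = fun x => K * (Real.exp (-x) * (x ^ a * G (c-1) (a-b-c) x)) := by
    funext y
    unfold W TricomiU G
    rw [show a - b + 1 - c - 1 = a - b - c from by ring]
    ring
  set D1 : ℝ → ℝ := fun y => K * (Real.exp (-y) *
      (a * y ^ (a-1) * G (c-1) (a-b-c) y - y ^ a * G (c-1) (a-b-c) y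
        - y ^ a * G c (a-b-c) y)) with hD1def
  have hW1 : ∀ y ∈ Ioi (0:ℝ), HasDerivAt (W a b c) (D1 y) y := by
    intro y hy
    simp only [mem_Ioi] at hy
    have he : HasDerivAt (fun y : ℝ => Real.exp (-y)) (Real.exp (-y) * (-1)) y := by
      simpa using (hasDerivAt_neg y).exp
    have hpa : HasDerivAt (fun y : ℝ => y ^ a) (a * y ^ (a-1)) y :=
      Real.hasDerivAt_rpow_const (Or.inl (ne_of_gt hy))
    have hu : HasDerivAt (G (c-1) (a-b-c)) (-G (c-1+1) (a-b-c) y) y :=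
      hasDerivAt_G _ (by linarith) hy
    rw [hW]
    have := (he.mul (hpa.mul hu)).const_mul K
    refine this.congr_deriv ?_
    simp only [Pi.mul_apply, Pi.sub_apply]
    rw [show c - 1 + 1 = c from by ring]
    simp only [hD1def]
    ring
  intro x hx
  have heq : deriv (W a b c) =ᶠ[nhds x] D1 := by
    filter_upwards [isOpen_Ioi.mem_nhds hx] with y hy
    exact (hW1 y hy).deriv
  -- second derivative
  have he : HasDerivAt (fun y : ℝ => Real.exp (-y)) (Real.exp (-x) * (-1)) x := by
    simpa using (hasDerivAt_neg x).exp
  have hpa : HasDerivAt (fun y : ℝ => y ^ a) (a * x ^ (a-1)) x :=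
    Real.hasDerivAt_rpow_const (Or.inl (ne_of_gt hx))
  have hpa1 : HasDerivAt (fun y : ℝ => y ^ (a-1)) ((a-1) * x ^ (a-2)) x := by
    have := Real.hasDerivAt_rpow_const (x := x) (p := a-1) (Or.inl (ne_of_gt hx))
    rwa [show a - 1 - 1 = a - 2 from by ring] at this
  have hu : HasDerivAt (G (c-1) (a-b-c)) (-G c (a-b-c) x) x := by
    have := hasDerivAt_G (p := c-1) (a-b-c) (by linarith) hx
    rwa [show c - 1 + 1 = c from by ring] at this
  have hv : HasDerivAt (G c (a-b-c)) (-G (c+1) (a-b-c) x) x :=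
    hasDerivAt_G _ (by linarith) hx
  have hD1 : HasDerivAt D1
      (K * (Real.exp (-x) * (a*(a-1)*x^(a-2) * G (c-1) (a-b-c) x
        - 2*a*x^(a-1) * G (c-1) (a-b-c) x + x^a * G (c-1) (a-b-c) x
        - 2*a*x^(a-1) * G c (a-b-c) x + 2*x^a * G c (a-b-c) x
        + x^a * G (c+1) (a-b-c) x))) x := by
    have inner := (((hpa1.const_mul a).mul hu).sub (hpa.mul hu)).sub (hpa.mul hv)
    have := (he.mul inner).const_mul K
    refine this.congr_deriv ?_
    simp only [Pi.mul_apply, Pi.sub_apply]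
    have hxa1 : x ^ (a-1) = x ^ (a-2) * x := by
      rw [← Real.rpow_add_one (ne_of_gt hx), show a - 2 + 1 = a - 1 from by ring]
    have hxa : x ^ a = x ^ (a-1) * x := by
      rw [← Real.rpow_add_one (ne_of_gt hx), show a - 1 + 1 = a from by ring]
    rw [hxa, hxa1]
    ring
  refine ⟨(hW1 x hx).differentiableAt, ?_, ?_⟩
  · exact heq.differentiableAt_iff.mpr hD1.differentiableAt
  · have hd1 : deriv (W a b c) x = D1 x := (hW1 x hx).deriv
    have hd2 : deriv (deriv (W a b c)) x = _ := heq.deriv_eq.trans hD1.deriv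
    have hWx : W a b c x = K * (Real.exp (-x) * (x ^ a * G (c-1) (a-b-c) x)) := by
      rw [hW]
    -- Kummer relation
    have hk := kummer_G (β := a-b+1) hc0 hx
    rw [show a - b + 1 - c - 1 = a - b - c from by ring,
      show a - b + 1 - c = (a - b - c) + 1 from by ring] at hk
    have hsplit1 : G (c-1) ((a-b-c)+1) x = G (c-1) (a-b-c) x + G c (a-b-c) x := by
      have := G_split (p := c-1) (a-b-c) (by linarith) hx
      rwa [show c - 1 + 1 = c from by ring] at this
    have hsplit2 : G c ((a-b-c)+1) x = G c (a-b-c) x + G (c+1) (a-b-c) x :=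
      G_split (a-b-c) (by linarith) hx
    rw [hsplit1, hsplit2] at hk
    rw [hd1, hd2, hWx]
    simp only [hD1def]
    have hxa1 : x ^ (a-1) = x ^ (a-2) * x := by
      rw [← Real.rpow_add_one (ne_of_gt hx), show a - 2 + 1 = a - 1 from by ring]
    have hxa : x ^ a = x ^ (a-2) * x * x := by
      rw [← Real.rpow_add_one (ne_of_gt hx), ← Real.rpow_add_one (ne_of_gt hx),
        show a - 2 + 1 + 1 = a from by ring]
    rw [hxa, hxa1]
    linear_combination (-(K * Real.exp (-x) * x ^ (a-2) * x^3)) * hk
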